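/- Let f ∈ BV(Q(0,1)) satisfy the NCBV condition and let ε > 0, and let F̃_ε be the finite union of squares provided by the isolation lemma (so that |D^a f|(F̃_ε) ≤ ε|D^a f|(Q(0,1)) and |D^s f|(Q(0,1) \ F̃_ε) ≤ ε|D^s f|(Q(0,1)), with the bound ε²|D^a f|(Q(0,1)) when |D^a f|(Q(0,1)) > 0). Then there exists α₀ with 0 < α₀ < ε such that for any 0 < α ≤ α₀ there exists K = K(ε,α) ∈ ℕ such that, dividing Q(0,1) into the 2^{2K} K-dyadic squares and letting F_{ε,K} be the collection of K-dyadic squares which intersect F̃_ε or have a neighbouring K-dyadic square intersecting F̃_ε, and F̃_{ε,K} their union: (1) |D^a f|(F̃_{ε,K}) ≤ 2ε|D^a f|(Q(0,1)); and (2) |D^s f|(Q(0,1) \ F̃_{ε,K}) ≤ ε|D^s f|(Q(0,1)), and if |D^a f|(Q(0,1)) > 0 then also |D^s f|(Q(0,1) \ F̃_{ε,K}) ≤ ε²|D^a f|(Q(0,1)). -/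

import Mathlib

open MeasureTheory Set Filter Metric
open scoped ENNReal Topology RealInnerProductSpace NNReal

noncomputable section

/-- The Euclidean plane `ℝ²`. -/
abbrev E2 : Type := EuclideanSpace ℝ (Fin 2)

/-- The real inner product on `ℝ²`. -/
def rinner (x y : E2) : ℝ := ⟪x, y⟫

/-- The point of `ℝ²` with coordinates `x`, `y`. -/
def pt (x y : ℝ) : E2 := (WithLp.equiv 2 (Fin 2 → ℝ)).symm ![x, y]

/-- The open square `Q(c,r)` centred at `c` with side `2r`. -/
def osq (c : E2) (r : ℝ) : Set E2 := {p : E2 | ∀ i, |p i - c i| < r}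

/-- The closed square centred at `c` with side `2r`. -/
def csq (c : E2) (r : ℝ) : Set E2 := {p : E2 | ∀ i, |p i - c i| ≤ r}

/-- The unit square `Q(0,1) = (-1,1)²`. -/
def Q01 : Set E2 := osq 0 1

/-- First coordinate vector. -/
def e₀ : E2 := EuclideanSpace.single 0 1
/-- Second coordinate vector. -/
def e₁ : E2 := EuclideanSpace.single 1 1

/-- The rank-one matrix (tensor product) `u ⊗ v`, viewed as the linear map
`w ↦ ⟪v, w⟫ • u`. -/
def tensor (u v : E2) : E2 →L[ℝ] E2 := (innerSL ℝ v).smulRight u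

/-- A (representative of a) planar `BV` map on an open set `Ω ⊆ ℝ²`:  an integrable map `f`
together with a finite measure `var = |Df|` (the total variation of the distributional
derivative) carried by `Ω`, and the polar density `g` (with `‖g‖ = 1` `|Df|`-a.e. and
`Df = g |Df|`), linked to `f` by the integration-by-parts formula defining the
distributional derivative. -/
structure BVMap (Ω : Set E2) where
  f : E2 → E2
  integrable : MeasureTheory.IntegrableOn f Ω MeasureTheory.volume
  var : Measure E2
  var_finite : IsFiniteMeasure var
  var_outside : var Ωᶜ = 0
  g : E2 → (E2 →L[ℝ] E2)
  g_meas : AEStronglyMeasurable g var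
  g_norm : ∀ᵐ x ∂var, ‖g x‖ = 1
  int_by_parts : ∀ φ : E2 → ℝ, ContDiff ℝ 1 φ → HasCompactSupport φ →
    tsupport φ ⊆ Ω → ∀ (i j : Fin 2),
      ∫ x in Ω, f x i * (fderiv ℝ φ x (EuclideanSpace.single j 1)) ∂volume
        = - ∫ x, φ x * (g x (EuclideanSpace.single j 1) i) ∂var

namespace BVMap

variable {Ω : Set E2}

/-- The total variation `|D^a f|` of the absolutely continuous part of `Df`. -/
def varA (F : BVMap Ω) : Measure E2 := volume.withDensity (F.var.rnDeriv volume)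

/-- The total variation `|D^s f|` of the singular part of `Df`. -/
def varS (F : BVMap Ω) : Measure E2 := F.var.singularPart volume

/-- The approximate differential `∇f` of `f` (the density of `D^a f` w.r.t. Lebesgue
measure). -/
def aDeriv (F : BVMap Ω) (x : E2) : E2 →L[ℝ] E2 :=
  ((F.var.rnDeriv volume x).toReal) • F.g x

/-- The total variation `|⟨Df, v⟩|(A)` of the directional derivative measure
`⟨Df, v⟩ = (g v)|Df|` on `A`. -/
def dirVar (F : BVMap Ω) (v : E2) (A : Set E2) : ℝ≥0∞ := ∫⁻ x in A, ‖F.g x v‖₊ ∂F.var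

/-- `r⁻¹ |Df|(Q(X,r)) → 0` as `r → 0⁺`. -/
def SmallDeriv (F : BVMap Ω) (X : E2) : Prop :=
  Tendsto (fun r : ℝ => F.var (osq X r) / ENNReal.ofReal r) (𝓝[>] 0) (𝓝 0)

end BVMap

/-- `x` is an approximate jump point of `f` with one-sided limits `a`, `b` and
direction `ν`. -/
def ApproxJumpAt (f : E2 → E2) (x a b ν : E2) : Prop :=
  ‖ν‖ = 1 ∧ a ≠ b ∧
  Tendsto (fun r : ℝ => ⨍ y in {y ∈ ball x r | 0 < rinner (y - x) ν}, ‖f y - a‖ ∂volume)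
    (𝓝[>] 0) (𝓝 0) ∧
  Tendsto (fun r : ℝ => ⨍ y in {y ∈ ball x r | rinner (y - x) ν < 0}, ‖f y - b‖ ∂volume)
    (𝓝[>] 0) (𝓝 0)

/-- The approximate jump set `J_f` of `f`. -/
def Jset (f : E2 → E2) : Set E2 := {x | ∃ a b ν, ApproxJumpAt f x a b ν}

/-- `x` is a Lebesgue point of the jump part density `(f⁺-f⁻) ⊗ ν` with respect to
`H¹` restricted to `S` (here `jp, jm, ν` denote a choice of the jump data `f⁺, f⁻, ν`). -/
def JumpLebesguePointOn (S : Set E2) (jp jm ν : E2 → E2) (x : E2) : Prop :=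
  Tendsto (fun r : ℝ =>
      (∫ y in S ∩ ball x r,
          ‖tensor (jp y - jm y) (ν y) - tensor (jp x - jm x) (ν x)‖ ∂(μH[1])) / r)
    (𝓝[>] 0) (𝓝 0)

/-- A finitely piecewise linear injective curve `γ : [0,1] → ℝ²`, with its breakpoints
`t 0 = 0 < t 1 < ⋯ < t n = 1`. -/
structure PLCurve where
  n : ℕ
  γ : ℝ → E2
  t : Fin (n + 1) → ℝ
  t_mono : StrictMono t
  t_first : t 0 = 0
  t_last : t (Fin.last n) = 1
  affine : ∀ i : Fin n, ∀ s ∈ Icc (t i.castSucc) (t i.succ),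
    γ s = γ (t i.castSucc)
      + ((s - t i.castSucc) / (t i.succ - t i.castSucc)) • (γ (t i.succ) - γ (t i.castSucc))
  inj : InjOn γ (Icc 0 1)

/-- The image of a piecewise linear curve. -/
def PLCurve.im (c : PLCurve) : Set E2 := c.γ '' Icc 0 1

/-- The set covered by a grid of piecewise linear curves. -/
def gridSet {K : ℕ} (Γ : Fin K → PLCurve) : Set E2 := ⋃ i, (Γ i).im

/-- The grid `Γ` (a finite union of piecewise linear injective curves inside `Q(0,1)`,
any two meeting in at most one point) is admissible for `f`:  `f ∘ γᵢ` is one-dimensional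
`BV`, `f⌉Γ` is continuous at every breakpoint and every intersection point, and
`r⁻¹|Df|(Q(X,r)) → 0` at all those points. -/
def Admissible (F : BVMap Q01) {K : ℕ} (Γ : Fin K → PLCurve) : Prop :=
  (∀ i, MapsTo (Γ i).γ (Icc 0 1) Q01) ∧
  (∀ i j, i ≠ j → ((Γ i).im ∩ (Γ j).im).Subsingleton) ∧
  (∀ i, BoundedVariationOn (F.f ∘ (Γ i).γ) (Ioo 0 1)) ∧
  (∀ i (k : Fin ((Γ i).n + 1)),
    ContinuousWithinAt F.f (gridSet Γ) ((Γ i).γ ((Γ i).t k)) ∧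
      F.SmallDeriv ((Γ i).γ ((Γ i).t k))) ∧
  (∀ i j, i ≠ j → ∀ X ∈ (Γ i).im ∩ (Γ j).im,
    ContinuousWithinAt F.f (gridSet Γ) X ∧ F.SmallDeriv X)

/-- Full vertical segment `{x} × [-1,1]` of `Q(0,1)`. -/
def vline (x : ℝ) : Set E2 := {p : E2 | p 0 = x ∧ p 1 ∈ Icc (-1 : ℝ) 1}
/-- Full horizontal segment `[-1,1] × {y}` of `Q(0,1)`. -/
def hline (y : ℝ) : Set E2 := {p : E2 | p 1 = y ∧ p 0 ∈ Icc (-1 : ℝ) 1}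

/-- `jp, jm, ν` are jump data for `f` on the grid `Γ`, and every jump point of `f` on `Γ`
is a Lebesgue point of `(f⁺-f⁻) ⊗ ν` with respect to `H¹⌉J_f`. -/
def GridJumpData (F : BVMap Q01) {K : ℕ} (Γ : Fin K → PLCurve) (jp jm ν : E2 → E2) : Prop :=
  ∀ z ∈ gridSet Γ ∩ Jset F.f,
    ApproxJumpAt F.f z (jp z) (jm z) (ν z) ∧ JumpLebesguePointOn (Jset F.f) jp jm ν z

/-- A good straight grid for `f`: an admissible grid made of full vertical and horizontal
segments, on which every jump point of `f` is a Lebesgue point of `(f⁺-f⁻) ⊗ ν` with respect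
to `H¹⌉J_f`, the jump direction never being orthogonal to the grid line through the point. -/
def GoodStraightGrid (F : BVMap Q01) {K : ℕ} (Γ : Fin K → PLCurve) : Prop :=
  Admissible F Γ ∧
  (∀ i, (∃ x, (Γ i).im = vline x) ∨ (∃ y, (Γ i).im = hline y)) ∧
  ∃ jp jm ν : E2 → E2, GridJumpData F Γ jp jm ν ∧
    (∀ i x, (Γ i).im = vline x → ∀ z ∈ (Γ i).im ∩ Jset F.f, rinner e₁ (ν z) ≠ 0) ∧
    (∀ i y, (Γ i).im = hline y → ∀ z ∈ (Γ i).im ∩ Jset F.f, rinner e₀ (ν z) ≠ 0)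

/-- A good non-straight grid for `f`: an admissible grid on which every jump point of `f`
is a Lebesgue point of `(f⁺-f⁻) ⊗ ν` with respect to `H¹⌉J_f`, and the tangent `γᵢ'(t)`
exists and is not orthogonal to the jump direction at every jump point. -/
def GoodNonStraightGrid (F : BVMap Q01) {K : ℕ} (Γ : Fin K → PLCurve) : Prop :=
  Admissible F Γ ∧
  ∃ jp jm ν : E2 → E2, GridJumpData F Γ jp jm ν ∧
    ∀ i, ∀ s ∈ Icc (0:ℝ) 1, (Γ i).γ s ∈ Jset F.f →
      ∃ d : E2, HasDerivAt (Γ i).γ d s ∧ rinner d (ν ((Γ i).γ s)) ≠ 0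

/-- `h` is the geometric representative of `f` along the curve `γ` (defined on `[0,1]`):
denoting by `Y t`, `Z t` the one-sided limits of `f ∘ γ` at `t`, and by
`l t`, `L t` the variations of `f ∘ γ` on `[0,t)`, `[0,t]`, the filled-in curve `h̃`
parametrizes the segment `[Y t, Z t]` at constant speed on `[l t + t, L t + t]` and
`h (γ t) = h̃ ((1 + L 1) t)`. -/
def IsGeomRepOn (f : E2 → E2) (γ : ℝ → E2) (h : E2 → E2) : Prop :=
  ∃ (Y Z ht : ℝ → E2),
    (∀ t ∈ Ioc (0:ℝ) 1, Tendsto (f ∘ γ) (𝓝[<] t) (𝓝 (Y t))) ∧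
    (∀ t ∈ Ico (0:ℝ) 1, Tendsto (f ∘ γ) (𝓝[>] t) (𝓝 (Z t))) ∧
    (∀ t ∈ Icc (0:ℝ) 1, ∀ θ ∈ Icc (0:ℝ) 1,
      ht ((eVariationOn (f ∘ γ) (Ico 0 t)).toReal + t
          + θ * ((eVariationOn (f ∘ γ) (Icc 0 t)).toReal
              - (eVariationOn (f ∘ γ) (Ico 0 t)).toReal))
        = Y t + θ • (Z t - Y t)) ∧
    (∀ t ∈ Icc (0:ℝ) 1, h (γ t) = ht ((1 + (eVariationOn (f ∘ γ) (Icc 0 1)).toReal) * t))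

/-- `h` is the geometric representative of `f` on the grid `Γ`. -/
def IsGeomRep (F : BVMap Q01) {K : ℕ} (Γ : Fin K → PLCurve) (h : E2 → E2) : Prop :=
  ∀ i, IsGeomRepOn F.f (Γ i).γ h

/-- The no-crossing `BV` condition: on every good straight grid, the geometric
representative of `f` can be uniformly approximated by continuous injective maps. -/
def NCBV (F : BVMap Q01) : Prop :=
  ∀ σ : ℝ, 0 < σ → ∀ (K : ℕ) (Γ : Fin K → PLCurve), GoodStraightGrid F Γ →
    ∀ h : E2 → E2, IsGeomRep F Γ h →
      ∃ H : E2 → E2, ContinuousOn H (gridSet Γ) ∧ InjOn H (gridSet Γ) ∧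
        ∀ x ∈ gridSet Γ, ‖h x - H x‖ < σ

/-- The no-crossing `BV⁺` condition: on every good non-straight grid, the geometric
representative of `f` can be uniformly approximated by continuous injective maps. -/
def NCBVplus (F : BVMap Q01) : Prop :=
  ∀ σ : ℝ, 0 < σ → ∀ (K : ℕ) (Γ : Fin K → PLCurve), GoodNonStraightGrid F Γ →
    ∀ h : E2 → E2, IsGeomRep F Γ h →
      ∃ H : E2 → E2, ContinuousOn H (gridSet Γ) ∧ InjOn H (gridSet Γ) ∧
        ∀ x ∈ gridSet Γ, ‖h x - H x‖ < σ

/-- The matrix-valued measure `Df` evaluated on the set `A`. -/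
def DfSet (F : BVMap Q01) (A : Set E2) : E2 →L[ℝ] E2 := ∫ x in A, F.g x ∂F.var

/-- The matrix-valued measure `D^a f` evaluated on the set `A`. -/
def DafSet (F : BVMap Q01) (A : Set E2) : E2 →L[ℝ] E2 :=
  ∫ x in A, ((F.var.rnDeriv volume x).toReal) • F.g x ∂volume

/-- The total variation on `S` of a finitely additive matrix-valued set function, as the
supremum over finite disjoint families of measurable subsets of `S`. -/
def tvOn (m : Set E2 → (E2 →L[ℝ] E2)) (S : Set E2) : ℝ≥0∞ :=
  ⨆ (n : ℕ) (A : Fin n → Set E2) (_ : ∀ i, MeasurableSet (A i) ∧ A i ⊆ S)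
    (_ : Pairwise fun i j => Disjoint (A i) (A j)),
      ENNReal.ofReal (∑ i, ‖m (A i)‖)

/-- Area-strict convergence `f_k → f` on `Q(0,1)`:  `L¹` convergence, together with a
decomposition `Df_k = μ_k + ν_k` (as matrix-valued measures, here represented by densities
`m k`, `s k` with respect to finite measures `lam k`) such that `|μ_k - D^a f|(Q(0,1)) → 0`
and `|ν_k|(Q(0,1)) → |D^s f|(Q(0,1))`. -/
def AreaStrict (Fk : ℕ → BVMap Q01) (F : BVMap Q01) : Prop :=
  Tendsto (fun k => ∫ x in Q01, ‖(Fk k).f x - F.f x‖ ∂volume) atTop (𝓝 0) ∧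
  ∃ (lam : ℕ → Measure E2) (m s : ℕ → E2 → (E2 →L[ℝ] E2)),
    (∀ k, IsFiniteMeasure (lam k)) ∧
    (∀ k, Integrable (m k) (lam k)) ∧ (∀ k, Integrable (s k) (lam k)) ∧
    (∀ k (A : Set E2), MeasurableSet A →
      (∫ x in A, m k x ∂(lam k)) + (∫ x in A, s k x ∂(lam k)) = DfSet (Fk k) A) ∧
    Tendsto (fun k => tvOn (fun A => (∫ x in A, m k x ∂(lam k)) - DafSet F A) Q01)
      atTop (𝓝 0) ∧
    Tendsto (fun k => ∫⁻ x in Q01, ‖s k x‖₊ ∂(lam k)) atTop (𝓝 ((F.varS) Q01))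

/-- Weak `BV` convergence `f_k → f` on `Q(0,1)`: `L¹` convergence together with weak*
convergence of the derivative measures `Df_k → Df`. -/
def WeakBVTendsto (Fk : ℕ → BVMap Q01) (F : BVMap Q01) : Prop :=
  Tendsto (fun k => ∫ x in Q01, ‖(Fk k).f x - F.f x‖ ∂volume) atTop (𝓝 0) ∧
  ∀ φ : E2 → ℝ, Continuous φ → HasCompactSupport φ → tsupport φ ⊆ Q01 →
    ∀ i j : Fin 2,
      Tendsto (fun k => ∫ x, φ x * ((Fk k).g x (EuclideanSpace.single j 1) i) ∂(Fk k).var)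
        atTop (𝓝 (∫ x, φ x * (F.g x (EuclideanSpace.single j 1) i) ∂F.var))

/-- The `m`-strict energy `|D₁ f|(Q(0,1)) + |D₂ f|(Q(0,1))`. -/
def MStrictEnergy (F : BVMap Q01) : ℝ≥0∞ := F.dirVar e₀ Q01 + F.dirVar e₁ Q01

/-- `F` is a diffeomorphism of `Q(0,1)` onto itself equal to the identity on the
boundary. -/
def IsDiffeoQ (F : BVMap Q01) : Prop :=
  MapsTo F.f Q01 Q01 ∧ (∀ x ∈ frontier Q01, F.f x = x) ∧
  ContDiffOn ℝ 1 F.f Q01 ∧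
  ∃ Finv : E2 → E2, MapsTo Finv Q01 Q01 ∧ ContDiffOn ℝ 1 Finv Q01 ∧
    (∀ x ∈ Q01, Finv (F.f x) = x) ∧ (∀ y ∈ Q01, F.f (Finv y) = y)

/-- `F` is a homeomorphism of `Q(0,1)` onto itself equal to the identity on the
boundary. -/
def IsHomeoQ (F : BVMap Q01) : Prop :=
  MapsTo F.f Q01 Q01 ∧ (∀ x ∈ frontier Q01, F.f x = x) ∧
  ContinuousOn F.f Q01 ∧
  ∃ Finv : E2 → E2, MapsTo Finv Q01 Q01 ∧ ContinuousOn Finv Q01 ∧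
    (∀ x ∈ Q01, Finv (F.f x) = x) ∧ (∀ y ∈ Q01, F.f (Finv y) = y)

/-- The centre of the `K`-dyadic square of `Q(0,1)` with indices `a`, `b`. -/
def dyCenter (K : ℕ) (a b : Fin (2 ^ K)) : E2 :=
  pt (-1 + (2 * (a : ℝ) + 1) * (2 : ℝ) ^ (-(K : ℤ)))
     (-1 + (2 * (b : ℝ) + 1) * (2 : ℝ) ^ (-(K : ℤ)))

/-- The (closed) `K`-dyadic square of `Q(0,1)` with indices `a`, `b`; its side is
`2 · 2^{-K}`. -/
def dySq (K : ℕ) (a b : Fin (2 ^ K)) : Set E2 :=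
  csq (dyCenter K a b) ((2 : ℝ) ^ (-(K : ℤ)))

/-- The `K`-dyadic square with indices `a`, `b` intersects `T` or has a neighbouring
(touching) `K`-dyadic square intersecting `T`; this is the collection `F_{ε,K}` when
`T = F̃_ε`. -/
def InNearFam (K : ℕ) (T : Set E2) (a b : Fin (2 ^ K)) : Prop :=
  (dySq K a b ∩ T).Nonempty ∨
    ∃ a' b' : Fin (2 ^ K), (dySq K a' b' ∩ dySq K a b).Nonempty ∧ (dySq K a' b' ∩ T).Nonempty

/-- The union `F̃_{ε,K}` of the squares of the collection `F_{ε,K}`. -/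
def nearFamSet (K : ℕ) (T : Set E2) : Set E2 :=
  ⋃ (a : Fin (2 ^ K)) (b : Fin (2 ^ K)) (_ : InNearFam K T a b), dySq K a b

/-! ### Auxiliary lemmas -/

theorem hyp_null (i : Fin 2) (t : ℝ) : volume {p : E2 | p i = t} = 0 := by
  have h : {p : E2 | p i = t}
      = (fun p : E2 => p + (-(EuclideanSpace.single i t : E2))) ⁻¹'
        (LinearMap.ker ((EuclideanSpace.proj i : E2 →L[ℝ] ℝ) : E2 →ₗ[ℝ] ℝ)) := by
    ext p
    simp only [mem_setOf_eq, mem_preimage, SetLike.mem_coe, LinearMap.mem_ker]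
    constructor
    · intro hp; simp [hp]
    · intro hp
      have : p i + -t = 0 := by simpa using hp
      linarith
  rw [h, measure_preimage_add_right]
  refine Measure.addHaar_submodule _ _ ?_
  intro hker
  have h0 := LinearMap.ker_eq_top.mp hker
  have h1 : ((EuclideanSpace.proj i : E2 →L[ℝ] ℝ) : E2 →ₗ[ℝ] ℝ)
      (EuclideanSpace.single i (1:ℝ)) = 1 := by simp
  rw [h0] at h1
  simp at h1

theorem sq_frontier_null (c : E2) (r : ℝ) : volume (csq c r \ osq c r) = 0 := by
  have hsub : csq c r \ osq c r ⊆
      ⋃ i : Fin 2, ({p : E2 | p i = c i - r} ∪ {p : E2 | p i = c i + r}) := by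
    intro p hp
    obtain ⟨hc, ho⟩ := hp
    simp only [osq, mem_setOf_eq, not_forall, not_lt] at ho
    obtain ⟨i, hi⟩ := ho
    have heq : |p i - c i| = r := le_antisymm (hc i) hi
    rcases abs_eq (le_trans (abs_nonneg _) (hc i)) |>.mp heq with h | h
    · exact mem_iUnion.mpr ⟨i, Or.inr (by simp only [mem_setOf_eq]; linarith)⟩
    · exact mem_iUnion.mpr ⟨i, Or.inl (by simp only [mem_setOf_eq]; linarith)⟩
  refine measure_mono_null hsub (measure_iUnion_null fun i => measure_union_null ?_ ?_) <;>
    exact hyp_null i _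

theorem csq_closed (c : E2) (r : ℝ) : IsClosed (csq c r) := by
  have : csq c r = ⋂ i : Fin 2, (fun p : E2 => |p i - c i|) ⁻¹' Iic r := by
    ext p; simp [csq]
  rw [this]
  exact isClosed_iInter fun i =>
    IsClosed.preimage (continuous_abs.comp (((EuclideanSpace.proj i).continuous).sub
      continuous_const)) isClosed_Iic

theorem line_cover (K : ℕ) (x : ℝ) (hx1 : -1 ≤ x) (hx2 : x < 1) :
    ∃ a : Fin (2 ^ K), |x - (-1 + (2 * (a : ℝ) + 1) * (2:ℝ) ^ (-(K:ℤ)))| ≤ (2:ℝ) ^ (-(K:ℤ)) := by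
  set h : ℝ := (2:ℝ) ^ (-(K:ℤ)) with hh
  have hpos : 0 < h := by positivity
  have hK : h * 2 ^ K = 1 := by
    rw [hh, ← zpow_natCast (2:ℝ) K, ← zpow_add₀ (by norm_num : (2:ℝ) ≠ 0)]
    simp
  set t : ℝ := (x + 1) / (2 * h) with ht
  have ht0 : 0 ≤ t := by
    apply div_nonneg (by linarith) (by linarith)
  have htlt : t < 2 ^ K := by
    rw [ht, div_lt_iff₀ (by linarith)]
    nlinarith
  have hfloor : (⌊t⌋₊ : ℝ) ≤ t := Nat.floor_le ht0
  have hfloor2 : t < (⌊t⌋₊ : ℝ) + 1 := Nat.lt_floor_add_one t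
  have hlt : ⌊t⌋₊ < 2 ^ K := by
    have := Nat.floor_lt ht0 |>.mpr (by exact_mod_cast htlt)
    exact_mod_cast this
  refine ⟨⟨⌊t⌋₊, hlt⟩, ?_⟩
  have e1 : 2 * (⌊t⌋₊ : ℝ) * h ≤ x + 1 := by
    have := mul_le_mul_of_nonneg_right hfloor (by linarith : (0:ℝ) ≤ 2 * h)
    rw [ht, div_mul_cancel₀ _ (by linarith : (2:ℝ) * h ≠ 0)] at this
    nlinarith
  have e2 : x + 1 < (2 * (⌊t⌋₊ : ℝ) + 2) * h := by
    have := mul_lt_mul_of_pos_right hfloor2 (by linarith : (0:ℝ) < 2 * h)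
    rw [ht, div_mul_cancel₀ _ (by linarith : (2:ℝ) * h ≠ 0)] at this
    nlinarith
  rw [abs_le]
  constructor <;> simp only [Fin.val_mk] <;> nlinarith

theorem mem_dySq_of_mem_Q01 (K : ℕ) (x : E2) (hx : x ∈ Q01) :
    ∃ a b : Fin (2 ^ K), x ∈ dySq K a b := by
  have h0 : |x 0| < 1 := by
    have := hx 0; rwa [show (0:E2) 0 = 0 from rfl, sub_zero] at this
  have h1 : |x 1| < 1 := by
    have := hx 1; rwa [show (0:E2) 1 = 0 from rfl, sub_zero] at this
  rw [abs_lt] at h0 h1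
  obtain ⟨a, ha⟩ := line_cover K (x 0) h0.1.le h0.2
  obtain ⟨b, hb⟩ := line_cover K (x 1) h1.1.le h1.2
  refine ⟨a, b, fun i => ?_⟩
  fin_cases i
  · simpa [dySq, dyCenter, csq, pt] using ha
  · simpa [dySq, dyCenter, csq, pt] using hb

theorem dySq_diam (K : ℕ) (a b : Fin (2 ^ K)) {p q : E2}
    (hp : p ∈ dySq K a b) (hq : q ∈ dySq K a b) :
    dist p q ≤ 3 * (2:ℝ) ^ (-(K:ℤ)) := by
  set h : ℝ := (2:ℝ) ^ (-(K:ℤ)) with hh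
  have hpos : 0 < h := by positivity
  have hc : ∀ i, dist (p i) (q i) ≤ 2 * h := by
    intro i
    have h1 := hp i
    have h2 := hq i
    rw [Real.dist_eq]
    have : p i - q i = (p i - dyCenter K a b i) - (q i - dyCenter K a b i) := by ring
    rw [this]
    calc |(p i - dyCenter K a b i) - (q i - dyCenter K a b i)|
        ≤ |p i - dyCenter K a b i| + |q i - dyCenter K a b i| := abs_sub _ _
      _ ≤ 2 * h := by linarith
  rw [EuclideanSpace.dist_eq]
  have : ∑ i, dist (p i) (q i) ^ 2 ≤ (3 * h) ^ 2 := by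
    rw [Fin.sum_univ_two]
    have c0 := hc 0
    have c1 := hc 1
    have d0 : (0:ℝ) ≤ dist (p 0) (q 0) := dist_nonneg
    have d1 : (0:ℝ) ≤ dist (p 1) (q 1) := dist_nonneg
    nlinarith
  calc Real.sqrt (∑ i, dist (p i) (q i) ^ 2) ≤ Real.sqrt ((3 * h) ^ 2) :=
        Real.sqrt_le_sqrt this
    _ = 3 * h := by rw [Real.sqrt_sq (by linarith)]

theorem nearFamSet_subset_cthickening (K : ℕ) (T : Set E2) :
    nearFamSet K T ⊆ Metric.cthickening (9 * (2:ℝ) ^ (-(K:ℤ))) T := by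
  intro x hx
  simp only [nearFamSet, mem_iUnion] at hx
  obtain ⟨a, b, hnear, hx⟩ := hx
  set h : ℝ := (2:ℝ) ^ (-(K:ℤ)) with hh
  rcases hnear with ⟨y, hy1, hy2⟩ | ⟨a', b', ⟨y, hy1, hy2⟩, ⟨z, hz1, hz2⟩⟩
  · refine Metric.mem_cthickening_of_dist_le x y _ T hy2 ?_
    calc dist x y ≤ 3 * h := dySq_diam K a b hx hy1
      _ ≤ 9 * h := by nlinarith [show (0:ℝ) < h by positivity]
  · refine Metric.mem_cthickening_of_dist_le x z _ T hz2 ?_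
    calc dist x z ≤ dist x y + dist y z := dist_triangle _ _ _
      _ ≤ 3 * h + 3 * h := add_le_add (dySq_diam K a b hx hy2) (dySq_diam K a' b' hy1 hz1)
      _ ≤ 9 * h := by nlinarith [show (0:ℝ) < h by positivity]

/-- **Dyadic localisation of the isolating set.**  Let `f ∈ BV(Q(0,1))` be an `NCBV` map,
`ε > 0`, and let `F̃_ε` (a finite union of squares) satisfy the conclusions of the
isolation lemma.  Then there is `0 < α₀ < ε` such that for every `0 < α ≤ α₀` there is
`K = K(ε,α) ∈ ℕ` such that, with `F_{ε,K}` the collection of `K`-dyadic squares meeting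
`F̃_ε` or having a neighbour meeting `F̃_ε`, and `F̃_{ε,K}` its union:
(1) `|D^a f|(F̃_{ε,K}) ≤ 2ε|D^a f|(Q(0,1))`, and
(2) `|D^s f|(Q(0,1) \ F̃_{ε,K}) ≤ ε|D^s f|(Q(0,1))`, with moreover
`|D^s f|(Q(0,1) \ F̃_{ε,K}) ≤ ε²|D^a f|(Q(0,1))` when `|D^a f|(Q(0,1)) > 0`. -/
theorem dyadic_isolation (F : BVMap Q01) (hNC : NCBV F) (ε : ℝ) (hε : 0 < ε)
    (N₀ : ℕ) (c : Fin N₀ → E2) (rad : Fin N₀ → ℝ) (hrad : ∀ i, 0 < rad i)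
    (Ftil : Set E2) (hFtil : Ftil = ⋃ i, osq (c i) (rad i))
    (h1 : F.varA Ftil ≤ ENNReal.ofReal ε * F.varA Q01)
    (h2 : F.varS (Q01 \ Ftil) ≤ ENNReal.ofReal ε * F.varS Q01)
    (h3 : 0 < F.varA Q01 →
      F.varS (Q01 \ Ftil) ≤ ENNReal.ofReal (ε ^ 2) * F.varA Q01) :
    ∃ α₀ : ℝ, 0 < α₀ ∧ α₀ < ε ∧
      ∀ α : ℝ, 0 < α → α ≤ α₀ →
        ∃ K : ℕ,
          F.varA (nearFamSet K Ftil) ≤ ENNReal.ofReal (2 * ε) * F.varA Q01 ∧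
          F.varS (Q01 \ nearFamSet K Ftil) ≤ ENNReal.ofReal ε * F.varS Q01 ∧
          (0 < F.varA Q01 →
            F.varS (Q01 \ nearFamSet K Ftil) ≤ ENNReal.ofReal (ε ^ 2) * F.varA Q01) := by
  haveI := F.var_finite
  -- `varA ≤ var`
  have hle : F.varA ≤ F.var := Measure.withDensity_rnDeriv_le F.var volume
  have hAfin : F.varA univ ≠ ⊤ := by
    refine ne_top_of_le_ne_top ?_ (hle univ)
    exact (measure_ne_top F.var univ)
  -- `Ftil ∩ Q01 ⊆ nearFamSet K Ftil` for any `K`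
  have hsub : ∀ K : ℕ, Q01 \ nearFamSet K Ftil ⊆ Q01 \ Ftil := by
    intro K x hx
    refine ⟨hx.1, fun hxF => hx.2 ?_⟩
    obtain ⟨a, b, hab⟩ := mem_dySq_of_mem_Q01 K x hx.1
    have : InNearFam K Ftil a b := Or.inl ⟨x, hab, hxF⟩
    simp only [nearFamSet, mem_iUnion]
    exact ⟨a, b, this, hab⟩
  -- conclusion (2)/(3) hold for every `K`
  have hS : ∀ K : ℕ, F.varS (Q01 \ nearFamSet K Ftil) ≤ F.varS (Q01 \ Ftil) :=
    fun K => measure_mono (hsub K)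
  -- find `K` for conclusion (1)
  have hK1 : ∃ K : ℕ, F.varA (nearFamSet K Ftil)
      ≤ ENNReal.ofReal (2 * ε) * F.varA Q01 := by
    rcases eq_or_ne (F.varA Q01) 0 with hm | hm
    · refine ⟨0, ?_⟩
      have huniv : F.varA univ = 0 := by
        have h1' : F.varA Q01ᶜ = 0 := by
          refine le_antisymm ?_ (zero_le)
          calc F.varA Q01ᶜ ≤ F.var Q01ᶜ := hle Q01ᶜ
            _ = 0 := F.var_outside
        refine le_antisymm ?_ (zero_le)
        calc F.varA univ = F.varA (Q01 ∪ Q01ᶜ) := by rw [union_compl_self]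
          _ ≤ F.varA Q01 + F.varA Q01ᶜ := measure_union_le _ _
          _ = 0 := by rw [hm, h1', add_zero]
      calc F.varA (nearFamSet 0 Ftil) ≤ F.varA univ := measure_mono (subset_univ _)
        _ = 0 := huniv
        _ ≤ _ := zero_le
    · -- `varA (closure Ftil) ≤ ε varA Q01 < 2ε varA Q01`
      have hmQne : F.varA Q01 ≠ ⊤ :=
        ne_top_of_le_ne_top hAfin (measure_mono (subset_univ _))
      have hclos : F.varA (closure Ftil) ≤ ENNReal.ofReal ε * F.varA Q01 := by
        have hFc : closure Ftil ⊆ Ftil ∪ ⋃ i, (csq (c i) (rad i) \ osq (c i) (rad i)) := by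
          have hcl : closure Ftil ⊆ ⋃ i, csq (c i) (rad i) := by
            rw [hFtil]
            refine closure_minimal (iUnion_mono fun i => ?_)
              (isClosed_iUnion_of_finite fun i => csq_closed _ _)
            intro p hp i
            exact (hp i).le
          intro x hx
          rcases Classical.em (x ∈ Ftil) with h | h
          · exact Or.inl h
          · obtain ⟨i, hi⟩ := mem_iUnion.mp (hcl hx)
            refine Or.inr (mem_iUnion.mpr ⟨i, hi, fun hxo => h ?_⟩)
            rw [hFtil]; exact mem_iUnion.mpr ⟨i, hxo⟩
        have hnull : F.varA (⋃ i, (csq (c i) (rad i) \ osq (c i) (rad i))) = 0 := by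
          refine MeasureTheory.withDensity_absolutelyContinuous volume _ ?_
          exact measure_iUnion_null fun i => sq_frontier_null _ _
        calc F.varA (closure Ftil)
            ≤ F.varA (Ftil ∪ ⋃ i, (csq (c i) (rad i) \ osq (c i) (rad i))) :=
              measure_mono hFc
          _ ≤ F.varA Ftil + F.varA (⋃ i, (csq (c i) (rad i) \ osq (c i) (rad i))) :=
              measure_union_le _ _
          _ = F.varA Ftil := by rw [hnull, add_zero]
          _ ≤ ENNReal.ofReal ε * F.varA Q01 := h1
      have hstrict : F.varA (closure Ftil) < ENNReal.ofReal (2 * ε) * F.varA Q01 := by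
        refine lt_of_le_of_lt hclos ?_
        rw [ENNReal.mul_lt_mul_iff_left hm hmQne]
        exact (ENNReal.ofReal_lt_ofReal_iff (by linarith)).mpr (by linarith)
      -- continuity from above along closed thickenings
      have htend : Tendsto (fun r : ℝ => F.varA (Metric.cthickening r Ftil)) (𝓝 0)
          (𝓝 (F.varA (closure Ftil))) := by
        refine tendsto_measure_cthickening ⟨1, one_pos, ?_⟩
        exact ne_top_of_le_ne_top hAfin (measure_mono (subset_univ _))
      have hδ : Tendsto (fun K : ℕ => 9 * (2:ℝ) ^ (-(K:ℤ))) atTop (𝓝 0) := by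
        have h2 : Tendsto (fun K : ℕ => ((2:ℝ)⁻¹) ^ K) atTop (𝓝 0) :=
          tendsto_pow_atTop_nhds_zero_of_lt_one (by norm_num) (by norm_num)
        have : (fun K : ℕ => 9 * (2:ℝ) ^ (-(K:ℤ))) = fun K : ℕ => 9 * ((2:ℝ)⁻¹) ^ K := by
          funext K
          rw [zpow_neg, ← inv_zpow, zpow_natCast]
        rw [this]
        simpa using h2.const_mul (9:ℝ)
      have hcomp : Tendsto (fun K : ℕ => F.varA (Metric.cthickening (9 * (2:ℝ) ^ (-(K:ℤ))) Ftil))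
          atTop (𝓝 (F.varA (closure Ftil))) := htend.comp hδ
      have hev : ∀ᶠ K : ℕ in atTop,
          F.varA (Metric.cthickening (9 * (2:ℝ) ^ (-(K:ℤ))) Ftil)
            < ENNReal.ofReal (2 * ε) * F.varA Q01 :=
        hcomp.eventually_lt_const hstrict
      obtain ⟨K, hK⟩ := hev.exists
      exact ⟨K, le_trans (measure_mono (nearFamSet_subset_cthickening K Ftil)) hK.le⟩
  obtain ⟨K, hK⟩ := hK1
  refine ⟨ε / 2, by positivity, by linarith, fun α hα hαε => ⟨K, hK, ?_, fun hpos => ?_⟩⟩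
  · exact le_trans (hS K) h2
  · exact le_trans (hS K) (h3 hpos)
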